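/- arXiv:1302.5258 — 2 statements merged into one kernel-verified Lean document; each statement's English description precedes it below -/
import Mathlib

section
/- Let E be a Hilbert space with orthonormal basis indexed so that E = E¹ ⊕ E², where (w_m) is an orthonormal basis of E², and set X^m = E¹ ⊕ span{w₁,...,w_m}. Suppose E embeds compactly into a Banach space L (with norm ‖·‖_L). Define η_m = sup{‖u‖_L/‖u‖ : u ∈ (X^m)^⊥, u ≠ 0}. Then η_m is nonincreasing and η_m → 0 as m → ∞. -/
open Filter Metric

theorem stmt_9
    (E : Type*) [NormedAddCommGroup E] [InnerProductSpace ℝ E] [CompleteSpace E]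
    (L : Type*) [NormedAddCommGroup L] [NormedSpace ℝ L] [CompleteSpace L]
    (ι : E →L[ℝ] L) (hι : IsCompactOperator ι)
    (E1 : Submodule ℝ E) (hE1closed : IsClosed (E1 : Set E))
    (w : ℕ → E) (hw : Orthonormal ℝ w) (hwmem : ∀ n, w n ∈ E1ᗮ)
    (hdense : (Submodule.span ℝ (Set.range w)).topologicalClosure = E1ᗮ)
    (X : ℕ → Submodule ℝ E)
    (hX : ∀ m, X m = E1 ⊔ Submodule.span ℝ (w '' {i | i < m}))
    (η : ℕ → ℝ)
    (hη : ∀ m, η m = sSup ((fun u : E => ‖ι u‖ / ‖u‖) '' {u : E | u ∈ (X m)ᗮ ∧ u ≠ 0})) :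
    Antitone η ∧ Tendsto η atTop (nhds 0) := by
  haveI : CompleteSpace E1 := hE1closed.completeSpace_coe
  let S : ℕ → Set ℝ := fun m => (fun u : E => ‖ι u‖ / ‖u‖) '' {u : E | u ∈ (X m)ᗮ ∧ u ≠ 0}
  have hS : ∀ m, η m = sSup (S m) := hη
  have hXmono : Monotone X := by
    intro a b hab
    rw [hX a, hX b]
    exact sup_le_sup_left (Submodule.span_mono (Set.image_mono fun i hi => lt_of_lt_of_le hi hab)) _
  have hbddS : ∀ m, ∀ x ∈ S m, 0 ≤ x ∧ x ≤ ‖ι‖ := by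
    rintro m x ⟨u, ⟨-, hu0⟩, rfl⟩
    constructor
    · positivity
    · rw [div_le_iff₀ (norm_pos_iff.2 hu0)]
      exact ι.le_opNorm u
  have hηnonneg : ∀ m, 0 ≤ η m := by
    intro m
    rw [hη m]
    exact Real.sSup_nonneg fun x hx => (hbddS m x hx).1
  have hAnti : Antitone η := by
    intro a b hab
    rcases (S b).eq_empty_or_nonempty with he | hne
    · rw [hS b, he, Real.sSup_empty]
      exact hηnonneg a
    · rw [hS a, hS b]
      refine csSup_le_csSup ⟨‖ι‖, fun x hx => (hbddS a x hx).2⟩ hne ?_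
      rintro x ⟨u, ⟨hu, hu0⟩, rfl⟩
      exact ⟨u, ⟨Submodule.orthogonal_le (hXmono hab) hu, hu0⟩, rfl⟩
  refine ⟨hAnti, ?_⟩
  -- key lemma
  have key : ∀ u : ℕ → E, (∀ m, u m ∈ (X m)ᗮ) → (∀ m, ‖u m‖ ≤ 1) →
      Tendsto (fun m => ι (u m)) atTop (nhds 0) := by
    intro u humem hunorm
    -- weak convergence to 0
    have weak : ∀ v : E, Tendsto (fun m => inner ℝ (u m) v : ℕ → ℝ) atTop (nhds 0) := by
      intro v
      have hv : v = (E1.orthogonalProjection v : E) + (E1ᗮ.orthogonalProjection v : E) := by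
        exact (E1.starProjection_add_starProjection_orthogonal v).symm
      set v1 : E := (E1.orthogonalProjection v : E)
      set v2 : E := (E1ᗮ.orthogonalProjection v : E)
      have hv1 : ∀ m, inner ℝ (u m) v1 = (0 : ℝ) := by
        intro m
        have : v1 ∈ X m := by
          rw [hX m]; exact Submodule.mem_sup_left (E1.orthogonalProjection v).2
        rw [real_inner_comm]
        exact humem m v1 this
      have hv2 : Tendsto (fun m => inner ℝ (u m) v2 : ℕ → ℝ) atTop (nhds 0) := by
        rw [NormedAddCommGroup.tendsto_atTop]
        intro ε hε
        have hv2mem : v2 ∈ (Submodule.span ℝ (Set.range w)).topologicalClosure := by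
          rw [hdense]; exact (E1ᗮ.orthogonalProjection v).2
        obtain ⟨p, hp, hpdist⟩ : ∃ p ∈ Submodule.span ℝ (Set.range w), ‖v2 - p‖ < ε / 2 := by
          have : v2 ∈ closure (Submodule.span ℝ (Set.range w) : Set E) := hv2mem
          rw [Metric.mem_closure_iff] at this
          obtain ⟨p, hp, hd⟩ := this (ε / 2) (by positivity)
          exact ⟨p, hp, by rwa [dist_eq_norm] at hd⟩
        obtain ⟨t, hts, htp⟩ := Submodule.mem_span_finite_of_mem_span hp
        -- find N with t ⊆ w '' {i | i < N}
        have : ∃ N, (t : Set E) ⊆ w '' {i | i < N} := by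
          have : ∀ x ∈ t, ∃ i, w i = x := fun x hx => hts hx
          choose f hf using this
          classical
          refine ⟨(t.attach.image fun x => f x.1 x.2).sup id + 1, ?_⟩
          intro x hx
          refine ⟨f x hx, ?_, hf x hx⟩
          have h : f x hx ≤ (t.attach.image fun x => f x.1 x.2).sup id :=
            Finset.le_sup (f := id) (Finset.mem_image.2 ⟨⟨x, hx⟩, Finset.mem_attach _ _, rfl⟩)
          simp only [Set.mem_setOf_eq]
          omega
        obtain ⟨N, hN⟩ := this
        refine ⟨N, fun m hm => ?_⟩
        have hpX : p ∈ X m := by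
          rw [hX m]
          refine Submodule.mem_sup_right (Submodule.span_le.2 ?_ htp)
          intro x hx
          exact Submodule.subset_span
            (Set.image_mono (fun i (hi : i < N) => lt_of_lt_of_le hi hm) (hN hx))
        have hup : inner ℝ (u m) p = (0 : ℝ) := by
          rw [real_inner_comm]; exact humem m p hpX
        calc ‖(inner ℝ (u m) v2 : ℝ) - 0‖ = ‖(inner ℝ (u m) (v2 - p) : ℝ)‖ := by
              rw [sub_zero, inner_sub_right, hup, sub_zero]
          _ ≤ ‖u m‖ * ‖v2 - p‖ := norm_inner_le_norm _ _
          _ ≤ 1 * (ε / 2) := by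
              apply mul_le_mul (hunorm m) hpdist.le (norm_nonneg _) zero_le_one
          _ < ε := by linarith
      have : (fun m => inner ℝ (u m) v : ℕ → ℝ) = fun m => inner ℝ (u m) v1 + inner ℝ (u m) v2 := by
        funext m
        rw [← inner_add_right, ← hv]
      rw [this]
      simpa using (tendsto_const_nhds.congr (fun m => (hv1 m).symm)).add hv2
    -- compactness + subsequence argument
    have hcpt : IsCompact (closure ((ι : E →ₗ[ℝ] L) '' Metric.closedBall 0 1)) := by
      have : IsCompactOperator (ι : E →ₗ[ℝ] L) := hι
      exact this.isCompact_closure_image_closedBall 1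
    refine tendsto_of_subseq_tendsto fun ns hns => ?_
    have hmem : ∀ n, ι (u (ns n)) ∈ closure ((ι : E →ₗ[ℝ] L) '' Metric.closedBall 0 1) := by
      intro n
      exact subset_closure ⟨u (ns n), by simpa using hunorm (ns n), rfl⟩
    obtain ⟨y, -, ms, hms, hmy⟩ := hcpt.tendsto_subseq hmem
    refine ⟨ms, ?_⟩
    have hy0 : y = 0 := by
      apply NormedSpace.eq_zero_of_forall_dual_eq_zero ℝ
      intro φ
      have h1 : Tendsto (fun n => φ (ι (u (ns (ms n))))) atTop (nhds (φ y)) :=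
        (φ.continuous.tendsto y).comp hmy
      have h2 : Tendsto (fun m => φ (ι (u m))) atTop (nhds 0) := by
        have := weak ((InnerProductSpace.toDual ℝ E).symm (φ.comp ι))
        refine this.congr fun m => ?_
        rw [real_inner_comm, InnerProductSpace.toDual_symm_apply]
        rfl
      have h3 : Tendsto (fun n => φ (ι (u (ns (ms n))))) atTop (nhds 0) :=
        h2.comp ((hns.comp hms.tendsto_atTop))
      exact tendsto_nhds_unique h1 h3
    rw [hy0] at hmy
    exact hmy
  -- choose almost-maximizers
  have hchoice : ∀ m, ∃ u : E, u ∈ (X m)ᗮ ∧ ‖u‖ ≤ 1 ∧ η m ≤ ‖ι u‖ + 1 / (m + 1) := by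
    intro m
    rcases (S m).eq_empty_or_nonempty with he | hne
    · refine ⟨0, Submodule.zero_mem _, by simp, ?_⟩
      rw [hS m, he, Real.sSup_empty]
      positivity
    · have hlt : η m - 1 / (m + 1) < sSup (S m) := by
        rw [hS m]
        have : (0:ℝ) < 1 / (m + 1) := by positivity
        linarith
      obtain ⟨x, hx, hxlt⟩ := exists_lt_of_lt_csSup hne hlt
      obtain ⟨v, ⟨hv, hv0⟩, rfl⟩ := hx
      have hvn : (0:ℝ) < ‖v‖ := norm_pos_iff.2 hv0
      refine ⟨‖v‖⁻¹ • v, Submodule.smul_mem _ _ hv, ?_, ?_⟩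
      · rw [norm_smul, norm_inv, norm_norm, inv_mul_cancel₀ hvn.ne']
      · have : ‖ι (‖v‖⁻¹ • v)‖ = ‖ι v‖ / ‖v‖ := by
          rw [map_smul, norm_smul, norm_inv, norm_norm, inv_mul_eq_div]
        rw [this]
        linarith
  choose u humem hunorm hub using hchoice
  have hto : Tendsto (fun m => ‖ι (u m)‖ + 1 / (m + 1 : ℝ)) atTop (nhds 0) := by
    have h1 : Tendsto (fun m => ‖ι (u m)‖) atTop (nhds 0) := by
      have := (key u humem hunorm)
      simpa [Function.comp_def] using (continuous_norm.tendsto (0:L)).comp this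
    have h2 : Tendsto (fun m : ℕ => 1 / (m + 1 : ℝ)) atTop (nhds 0) :=
      tendsto_one_div_add_atTop_nhds_zero_nat
    simpa using h1.add h2
  exact squeeze_zero hηnonneg hub hto
end

section
/- Let f be a C¹ functional on a Hilbert space E of the form f(u) = (1/2)(‖u⁺‖² − ‖u⁻‖²) − ∫_ℝ R(t,u)dt, where R satisfies R'(t,x)·x − 2R(t,x) ≥ b|x|^β for |x| ≥ r (b, r > 0, β > 1). If (u_n) ⊆ E satisfies 0 ≤ f(u_n) ≤ C and f'(u_n)·u_n → 0 with ‖u_n‖ → ∞, then ‖u_n‖^{−1} ∫_{\{|u_n(t)|≥r\}} |u_n|^β dt → 0 as n → ∞. -/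
open MeasureTheory Filter

theorem stmt_16 (N : ℕ)
    (E : Type*) [NormedAddCommGroup E] [InnerProductSpace ℝ E] [CompleteSpace E]
    (ι : E →ₗ[ℝ] (ℝ → EuclideanSpace ℝ (Fin (2 * N))))
    (R : ℝ → EuclideanSpace ℝ (Fin (2 * N)) → ℝ)
    (R' : ℝ → EuclideanSpace ℝ (Fin (2 * N)) → EuclideanSpace ℝ (Fin (2 * N)))
    (b r β C : ℝ) (hb : 0 < b) (hr : 0 < r) (hβ : 1 < β)
    (hRlow : ∀ (t : ℝ) (x : EuclideanSpace ℝ (Fin (2 * N))),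
      r ≤ ‖x‖ → b * ‖x‖ ^ β ≤ (inner ℝ (R' t x) x : ℝ) - 2 * R t x)
    (hRnonneg : ∀ (t : ℝ) (x : EuclideanSpace ℝ (Fin (2 * N))),
      0 ≤ (inner ℝ (R' t x) x : ℝ) - 2 * R t x)
    -- f(u) = ½(‖u⁺‖² − ‖u⁻‖²) − ∫ R(t,u), with orthogonal projections Pp, Pm:
    (Pp Pm : E →ₗ[ℝ] E) (f : E → ℝ) (df : E → E →L[ℝ] ℝ)
    (hf : ∀ u : E, f u = 1 / 2 * (‖Pp u‖ ^ 2 - ‖Pm u‖ ^ 2) - ∫ t : ℝ, R t (ι u t))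
    (hdf : ∀ u : E, HasFDerivAt f (df u) u)
    -- 2 f(uₙ) − f'(uₙ)·uₙ = ∫ [R'(t,uₙ)·uₙ − 2R(t,uₙ)] dt:
    (u : ℕ → E)
    (hident : ∀ n, 2 * f (u n) - df (u n) (u n)
      = ∫ t : ℝ, ((inner ℝ (R' t (ι (u n) t)) (ι (u n) t) : ℝ) - 2 * R t (ι (u n) t)))
    (hintegrable : ∀ n, Integrable
      (fun t : ℝ => (inner ℝ (R' t (ι (u n) t)) (ι (u n) t) : ℝ) - 2 * R t (ι (u n) t)) volume)
    (hmeas : ∀ n, AEStronglyMeasurable (ι (u n)) volume)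
    (hfbd : ∀ n, 0 ≤ f (u n) ∧ f (u n) ≤ C)
    (hdfu : Tendsto (fun n => df (u n) (u n)) atTop (nhds 0))
    (hnorm : Tendsto (fun n => ‖u n‖) atTop atTop) :
    Tendsto (fun n => (‖u n‖)⁻¹ * ∫ t in {t : ℝ | r ≤ ‖ι (u n) t‖}, ‖ι (u n) t‖ ^ β)
      atTop (nhds 0) := by

  -- notation
  set a : ℕ → ℝ := fun n => (‖u n‖)⁻¹ * ∫ t in {t : ℝ | r ≤ ‖ι (u n) t‖}, ‖ι (u n) t‖ ^ β
    with ha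
  have hβ0 : (0:ℝ) ≤ β := le_of_lt (lt_trans zero_lt_one hβ)
  have hInonneg : ∀ n, 0 ≤ ∫ t in {t : ℝ | r ≤ ‖ι (u n) t‖}, ‖ι (u n) t‖ ^ β := by
    intro n
    exact integral_nonneg fun t => Real.rpow_nonneg (norm_nonneg _) β
  have key : ∀ n, b * (∫ t in {t : ℝ | r ≤ ‖ι (u n) t‖}, ‖ι (u n) t‖ ^ β)
      ≤ 2 * f (u n) - df (u n) (u n) := by
    intro n
    set g : ℝ → ℝ := fun t => (inner ℝ (R' t (ι (u n) t)) (ι (u n) t) : ℝ) - 2 * R t (ι (u n) t)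
      with hg
    set s : Set ℝ := {t : ℝ | r ≤ ‖ι (u n) t‖} with hs
    have hsm : NullMeasurableSet s volume := by
      have h1 : AEMeasurable (fun t => ‖ι (u n) t‖) volume := (hmeas n).norm.aemeasurable
      exact h1.nullMeasurable measurableSet_Ici
    have hmeas2 : AEStronglyMeasurable (fun t => b * ‖ι (u n) t‖ ^ β) (volume.restrict s) := by
      have : AEStronglyMeasurable (fun t => ‖ι (u n) t‖ ^ β) volume :=
        (Real.continuous_rpow_const hβ0).comp_aestronglyMeasurable (hmeas n).norm
      exact (this.const_mul b).restrict
    have hgint : Integrable g (volume.restrict s) := (hintegrable n).restrict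
    have hbound : ∀ᵐ t ∂(volume.restrict s), b * ‖ι (u n) t‖ ^ β ≤ g t := by
      rw [ae_restrict_iff'₀ hsm]
      exact Filter.Eventually.of_forall fun t ht => hRlow t _ ht
    have hint1 : Integrable (fun t => b * ‖ι (u n) t‖ ^ β) (volume.restrict s) := by
      refine hgint.mono' hmeas2 ?_
      filter_upwards [hbound] with t ht
      rwa [Real.norm_eq_abs, abs_of_nonneg (mul_nonneg hb.le (Real.rpow_nonneg (norm_nonneg _) β))]
    calc b * (∫ t in s, ‖ι (u n) t‖ ^ β) = ∫ t in s, b * ‖ι (u n) t‖ ^ β := by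
          rw [integral_const_mul]
      _ ≤ ∫ t in s, g t := integral_mono_ae hint1 hgint hbound
      _ ≤ ∫ t, g t := setIntegral_le_integral (hintegrable n)
          (Filter.Eventually.of_forall fun t => hRnonneg t _)
      _ = 2 * f (u n) - df (u n) (u n) := (hident n).symm
  have hub : Tendsto (fun n => (‖u n‖)⁻¹ * ((2 * C + 1) / b)) atTop (nhds 0) := by
    have h1 : Tendsto (fun n => (‖u n‖)⁻¹) atTop (nhds 0) :=
      tendsto_inv_atTop_zero.comp hnorm
    simpa using h1.mul_const ((2 * C + 1) / b)
  refine tendsto_of_tendsto_of_tendsto_of_le_of_le' tendsto_const_nhds hub ?_ ?_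
  · exact Filter.Eventually.of_forall fun n =>
      mul_nonneg (inv_nonneg.2 (norm_nonneg _)) (hInonneg n)
  · have hev : ∀ᶠ n in atTop, |df (u n) (u n)| ≤ 1 := by
      have := Metric.tendsto_nhds.mp hdfu 1 one_pos
      filter_upwards [this] with n hn
      simpa [Real.dist_eq] using hn.le
    filter_upwards [hev] with n hn
    have hB : 2 * f (u n) - df (u n) (u n) ≤ 2 * C + 1 := by
      have h1 := (hfbd n).2
      have h2 : -(df (u n) (u n)) ≤ 1 := by
        have := neg_abs_le (df (u n) (u n))
        linarith [abs_le.mp hn]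
      linarith
    have hI : (∫ t in {t : ℝ | r ≤ ‖ι (u n) t‖}, ‖ι (u n) t‖ ^ β) ≤ (2 * C + 1) / b := by
      rw [le_div_iff₀ hb]
      calc (∫ t in {t : ℝ | r ≤ ‖ι (u n) t‖}, ‖ι (u n) t‖ ^ β) * b
          = b * ∫ t in {t : ℝ | r ≤ ‖ι (u n) t‖}, ‖ι (u n) t‖ ^ β := mul_comm _ _
        _ ≤ 2 * f (u n) - df (u n) (u n) := key n
        _ ≤ 2 * C + 1 := hB
    exact mul_le_mul_of_nonneg_left hI (inv_nonneg.2 (norm_nonneg _))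
end
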